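/- Fix r > 0, G_ll > 0, nonnegative G_lj for j ≠ l, and σ > 0. Define SINR_l(p) = G_ll p_l/(Σ_{j≠l} G_lj p_j + σ) and I_l(p) = r·p_l / log(1 + SINR_l(p)) for p > 0. Then for any α > 1 and any p > 0 componentwise, α·I_l(p) > I_l(α·p). -/

import Mathlib

open Finset

/-- Scalability of the Shannon-capacity interference function:
α·I_l(p) > I_l(α·p) for all α > 1 and p > 0. -/
theorem shannon_interference_scalable {n : ℕ} (l : Fin n)
    (r : ℝ) (hr : 0 < r) (G : Fin n → ℝ) (hGll : 0 < G l)
    (hG : ∀ j, j ≠ l → 0 ≤ G j) (σ : ℝ) (hσ : 0 < σ) :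
    let SINR : (Fin n → ℝ) → ℝ :=
      fun p => G l * p l / (∑ j ∈ univ.erase l, G j * p j + σ)
    let I : (Fin n → ℝ) → ℝ := fun p => r * p l / Real.log (1 + SINR p)
    ∀ α : ℝ, 1 < α → ∀ p : Fin n → ℝ, (∀ i, 0 < p i) →
      I (α • p) < α * I p := by
  intro SINR I α hα p hp
  have hα0 : (0:ℝ) < α := lt_trans one_pos hα
  set S := ∑ j ∈ univ.erase l, G j * p j with hSdef
  have hS : 0 ≤ S := Finset.sum_nonneg fun j hj =>
    mul_nonneg (hG j (Finset.mem_erase.mp hj).1) (hp j).le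
  have hSσ : (0:ℝ) < S + σ := by linarith
  have hsum : ∑ j ∈ univ.erase l, G j * (α • p) j = α * S := by
    simp only [Pi.smul_apply, smul_eq_mul, hSdef, Finset.mul_sum]
    exact Finset.sum_congr rfl fun j _ => by ring
  have hnum : 0 < G l * p l := mul_pos hGll (hp l)
  -- SINR p > 0
  have hSINRp : 0 < SINR p := div_pos hnum hSσ
  have hSINRap : SINR p < SINR (α • p) := by
    show G l * p l / (S + σ) < G l * (α • p) l / (∑ j ∈ univ.erase l, G j * (α • p) j + σ)
    rw [hsum]
    have h1 : (0:ℝ) < α * S + σ := by nlinarith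
    rw [div_lt_div_iff₀ hSσ h1, Pi.smul_apply, smul_eq_mul]
    nlinarith [mul_pos hnum (mul_pos (sub_pos.mpr hα) hσ)]
  have hlogp : 0 < Real.log (1 + SINR p) := Real.log_pos (by linarith)
  have hlogap : Real.log (1 + SINR p) < Real.log (1 + SINR (α • p)) :=
    Real.log_lt_log (by linarith) (by linarith)
  have hlogap0 : 0 < Real.log (1 + SINR (α • p)) := lt_trans hlogp hlogap
  have hrp : 0 < r * (α * p l) := mul_pos hr (mul_pos hα0 (hp l))
  show r * (α • p) l / Real.log (1 + SINR (α • p)) < α * (r * p l / Real.log (1 + SINR p))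
  rw [Pi.smul_apply, smul_eq_mul]
  calc r * (α * p l) / Real.log (1 + SINR (α • p))
      < r * (α * p l) / Real.log (1 + SINR p) :=
        div_lt_div_of_pos_left hrp hlogp hlogap
    _ = α * (r * p l / Real.log (1 + SINR p)) := by ring
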